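/- Let γ : ℝ → ℝ be positive and continuous and let φ(x) = ∫₀^x γ(t) dt be bi-Lipschitz for distances larger than N with constants C₁, C₂ > 0. Then ω_γ(z + i) > ω_γ(z) for every z with Im z ≥ 0. -/

import Mathlib

open MeasureTheory intervalIntegral

/-- The modified logarithm `log*|1 - z/t|`. -/
noncomputable def logStar (z : ℂ) (t : ℝ) : ℝ :=
  if 1 < |t| then Real.log (‖1 - z / (t : ℂ)‖) + z.re / t
  else Real.log (‖1 - z / (t : ℂ)‖)

/-- The potential `ω_γ(z) = ∫ log*|1 - z/t| γ(t) dt`. -/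
noncomputable def pot (γ : ℝ → ℝ) (z : ℂ) : ℝ :=
  ∫ t : ℝ, logStar z t * γ t

open Set

lemma intervalIntegrable_log_abs (a b : ℝ) :
    IntervalIntegrable (fun t => Real.log |t|) volume a b := by
  -- first: on [0, K] for K ≥ 0
  have key : ∀ K : ℝ, 0 ≤ K → IntegrableOn (fun t => Real.log |t|) (Ioc 0 K) volume := by
    intro K hK
    have hmeas : AEStronglyMeasurable (fun t : ℝ => Real.log |t|)
        (volume.restrict (Ioc 0 K)) :=
      (Real.measurable_log.comp measurable_abs).aestronglyMeasurable
    set K' : ℝ := max K 1 with hK'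
    have hK'1 : (1:ℝ) ≤ K' := le_max_right _ _
    have hmaj : IntegrableOn (fun t : ℝ => 2 * t ^ (-(1/2) : ℝ) + Real.log K')
        (Ioc 0 K) volume := by
      refine Integrable.add ?_ (integrableOn_const measure_Ioc_lt_top.ne)
      have h1 : IntervalIntegrable (fun t : ℝ => t ^ (-(1/2) : ℝ)) volume 0 K :=
        intervalIntegrable_rpow' (by norm_num)
      have := (intervalIntegrable_iff_integrableOn_Ioc_of_le hK).1 h1
      exact this.const_mul 2
    refine Integrable.mono' hmaj hmeas ?_
    filter_upwards [ae_restrict_mem measurableSet_Ioc] with t ht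
    have ht0 : 0 < t := ht.1
    have habs : |t| = t := abs_of_pos ht0
    rw [habs]
    rcases le_or_gt t 1 with h1 | h1
    · have hlog : Real.log t ≤ 0 := Real.log_nonpos ht0.le h1
      rw [Real.norm_eq_abs, abs_of_nonpos hlog]
      have h2 : -Real.log t = 2 * Real.log (t ^ (-(1/2) : ℝ)) := by
        rw [Real.log_rpow ht0]; ring
      have h3 : Real.log (t ^ (-(1/2) : ℝ)) ≤ t ^ (-(1/2) : ℝ) :=
        (Real.log_le_sub_one_of_pos (Real.rpow_pos_of_pos ht0 _)).trans (by linarith)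
      have h4 : (0:ℝ) ≤ Real.log K' := Real.log_nonneg hK'1
      nlinarith
    · have hlog : 0 ≤ Real.log t := Real.log_nonneg h1.le
      rw [Real.norm_eq_abs, abs_of_nonneg hlog]
      have h2 : Real.log t ≤ Real.log K' :=
        Real.log_le_log ht0 (le_trans (ht.2) (le_max_left _ _))
      have h3 : (0:ℝ) ≤ t ^ (-(1/2) : ℝ) := (Real.rpow_pos_of_pos ht0 _).le
      linarith
  have key2 : ∀ K : ℝ, 0 ≤ K →
      IntervalIntegrable (fun t => Real.log |t|) volume 0 K := by
    intro K hK
    exact (intervalIntegrable_iff_integrableOn_Ioc_of_le hK).2 (key K hK)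
  set K : ℝ := max |a| |b| with hKdef
  have hK : 0 ≤ K := le_trans (abs_nonneg a) (le_max_left _ _)
  have hpos : IntervalIntegrable (fun t => Real.log |t|) volume 0 K := key2 K hK
  have hneg : IntervalIntegrable (fun t => Real.log |t|) volume 0 (-K) := by
    have := (IntervalIntegrable.iff_comp_neg).1 hpos
    simpa using this
  have hall : IntervalIntegrable (fun t => Real.log |t|) volume (-K) K :=
    (hneg.symm).trans (b := 0) hpos
  apply hall.mono_set
  rw [uIcc_of_le (by linarith : -K ≤ K)]
  intro x hx
  rcases mem_uIcc.1 hx with h | h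
  · constructor
    · exact le_trans (neg_le_neg (le_max_left _ _)) (le_trans (neg_abs_le a) h.1)
    · exact le_trans h.2 (le_trans (le_abs_self b) (le_max_right _ _))
  · constructor
    · exact le_trans (neg_le_neg (le_max_right _ _)) (le_trans (neg_abs_le b) h.1)
    · exact le_trans h.2 (le_trans (le_abs_self a) (le_max_left _ _))

lemma intervalIntegrable_log_abs_sub (c a b : ℝ) :
    IntervalIntegrable (fun t => Real.log |t - c|) volume a b := by
  have := (intervalIntegrable_log_abs (a - c) (b - c)).comp_sub_right c
  simpa using this

lemma intervalIntegrable_log_cabs (z : ℂ) (a b : ℝ) :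
    IntervalIntegrable (fun t : ℝ => Real.log (‖(t : ℂ) - z‖)) volume a b := by
  rcases eq_or_ne z.im 0 with him | him
  · have heq : ∀ t : ℝ, ‖(t : ℂ) - z‖ = |t - z.re| := by
      intro t
      have : (t : ℂ) - z = ((t - z.re : ℝ) : ℂ) := by
        apply Complex.ext <;> simp [him]
      rw [this, Complex.norm_real, Real.norm_eq_abs]
    simpa only [heq] using intervalIntegrable_log_abs_sub z.re a b
  · have hcont : Continuous fun t : ℝ => Real.log (‖(t : ℂ) - z‖) := by
      refine Continuous.log
        (continuous_norm.comp
          ((Complex.continuous_ofReal).sub continuous_const)) ?_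
      intro t
      simp only [Function.comp_apply, ne_eq, norm_eq_zero, sub_eq_zero]
      intro h
      apply him
      rw [← h]
      simp
    exact hcont.intervalIntegrable a b

lemma measurable_logStar (z : ℂ) : Measurable (logStar z) := by
  unfold logStar
  have h1 : Measurable fun t : ℝ => Real.log (‖1 - z / (t : ℂ)‖) :=
    Real.measurable_log.comp <| continuous_norm.measurable.comp <|
      (measurable_const.sub (measurable_const.div Complex.measurable_ofReal))
  exact Measurable.ite (measurableSet_lt measurable_const measurable_abs)
    (h1.add (measurable_const.div measurable_id)) h1

lemma intervalIntegrable_logStar (z : ℂ) (a b : ℝ) :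
    IntervalIntegrable (logStar z) volume a b := by
  set e : ℝ → ℝ := fun t => if 1 < |t| then z.re / t else 0 with he
  have hemeas : Measurable e :=
    Measurable.ite (measurableSet_lt measurable_const measurable_abs)
      (measurable_const.div measurable_id) measurable_const
  have hee : IntervalIntegrable e volume a b := by
    rw [intervalIntegrable_iff]
    refine Integrable.mono' (g := fun _ => |z.re|)
      (integrableOn_const measure_Ioc_lt_top.ne) hemeas.aestronglyMeasurable ?_
    refine ae_of_all _ fun t => ?_
    simp only [he]
    split_ifs with ht
    · rw [Real.norm_eq_abs, abs_div]
      calc |z.re| / |t| ≤ |z.re| / 1 :=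
            div_le_div_of_nonneg_left (abs_nonneg _) one_pos ht.le
        _ = |z.re| := div_one _
    · simp
  have hh : IntervalIntegrable
      (fun t : ℝ => Real.log (‖(t:ℂ) - z‖) - Real.log |t| + e t) volume a b :=
    ((intervalIntegrable_log_cabs z a b).sub (intervalIntegrable_log_abs a b)).add hee
  rw [intervalIntegrable_iff] at hh ⊢
  refine hh.congr ?_
  have hnull : (volume : Measure ℝ) ({0, z.re} : Set ℝ) = 0 :=
    (Set.Countable.measure_zero (Set.Finite.countable (by
      exact (Set.finite_singleton _).insert _)) _)
  have hae : ∀ᵐ t : ℝ ∂(volume.restrict (Set.uIoc a b)), t ∉ ({0, z.re} : Set ℝ) :=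
    ae_restrict_of_ae (measure_eq_zero_iff_ae_notMem.1 hnull)
  filter_upwards [hae] with t ht
  simp only [Set.mem_insert_iff, Set.mem_singleton_iff, not_or] at ht
  obtain ⟨ht0, htz⟩ := ht
  have htC : (t : ℂ) ≠ 0 := Complex.ofReal_ne_zero.2 ht0
  have htzC : (t : ℂ) - z ≠ 0 := by
    intro h
    rw [sub_eq_zero] at h
    apply htz
    rw [← h]
    simp
  have hdiv : (1 : ℂ) - z / t = ((t : ℂ) - z) / t := by field_simp
  have hlog : Real.log (‖1 - z / (t:ℂ)‖)
      = Real.log (‖(t:ℂ) - z‖) - Real.log |t| := by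
    rw [hdiv, norm_div,
      Real.log_div (norm_ne_zero_iff.mpr htzC) (norm_ne_zero_iff.mpr htC), Complex.norm_real, Real.norm_eq_abs]
  show Real.log (‖(t:ℂ) - z‖) - Real.log |t| + e t = logStar z t
  unfold logStar
  simp only [he]
  split_ifs with h1
  · rw [hlog]
  · rw [hlog]; ring

lemma tail_integrable {g : ℝ → ℝ} (hgc : Continuous g) (hgnn : ∀ t, 0 ≤ g t)
    {C N : ℝ} (hN : 0 < N) (hC : 0 ≤ C) (hsum : ∀ a : ℝ, (∫ t in a..(a+N), g t) ≤ C)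
    {R : ℝ} (hR : 0 < R) :
    IntegrableOn (fun t => g t / t ^ 2) (Ioi R) volume := by
  set a : ℕ → ℝ := fun n => R + n * N with ha
  have hapos : ∀ n : ℕ, 0 < a n := fun n => by positivity
  have hamono : ∀ m n : ℕ, m ≤ n → a m ≤ a n := by
    intro m n h
    have : (m:ℝ) ≤ n := Nat.cast_le.2 h
    simp only [ha]
    nlinarith
  have hcover : Ioi R = ⋃ n : ℕ, Ioc (a n) (a (n+1)) := by
    ext x
    simp only [mem_Ioi, mem_iUnion, mem_Ioc]
    constructor
    · intro hx
      set y : ℝ := (x - R) / N with hy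
      have hy0 : 0 < y := div_pos (by linarith) hN
      set c : ℕ := ⌈y⌉₊ with hc
      have hc1 : 1 ≤ c := Nat.one_le_iff_ne_zero.2 (by
        simp only [hc, ne_eq, Nat.ceil_eq_zero, not_le]
        exact hy0)
      refine ⟨c - 1, ?_, ?_⟩
      · have h1 : (c : ℝ) < y + 1 := Nat.ceil_lt_add_one hy0.le
        have h2 : ((c - 1 : ℕ) : ℝ) = (c : ℝ) - 1 := by
          push_cast [Nat.cast_sub hc1]; ring
        simp only [ha]
        rw [h2]
        have : ((c:ℝ) - 1) * N < y * N := by nlinarith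
        rw [hy] at this
        rw [div_mul_cancel₀] at this
        · linarith
        · exact hN.ne'
      · have h1 : y ≤ (c : ℝ) := Nat.le_ceil y
        have h2 : ((c - 1 + 1 : ℕ) : ℝ) = (c : ℝ) := by
          rw [Nat.sub_add_cancel hc1]
        simp only [ha]
        rw [h2]
        have : y * N ≤ (c:ℝ) * N := by nlinarith
        rw [hy, div_mul_cancel₀ _ hN.ne'] at this
        linarith
    · rintro ⟨n, h1, _⟩
      exact lt_of_le_of_lt (by simp only [ha]; nlinarith [hapos n, Nat.cast_nonneg (α := ℝ) n] : R ≤ a n) h1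
  have hdisj : Pairwise (Function.onFun Disjoint fun n : ℕ => Ioc (a n) (a (n+1))) := by
    intro m n hmn
    rcases hmn.lt_or_gt with h | h
    · exact Set.Ioc_disjoint_Ioc.2 (le_trans (min_le_left _ _)
        (le_trans (hamono _ _ h) (le_max_right _ _)))
    · exact Set.Ioc_disjoint_Ioc.2 (le_trans (min_le_right _ _)
        (le_trans (hamono _ _ h) (le_max_left _ _)))
  have hmeas : AEStronglyMeasurable (fun t : ℝ => g t / t ^ 2)
      (volume.restrict (Ioi R)) :=
    (hgc.measurable.div ((measurable_id.pow_const 2))).aestronglyMeasurable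
  refine ⟨hmeas, ?_⟩
  rw [hasFiniteIntegral_iff_norm]
  have hnorm : ∫⁻ t in Ioi R, ENNReal.ofReal ‖g t / t ^ 2‖
      = ∫⁻ t in Ioi R, ENNReal.ofReal (g t / t ^ 2) := by
    refine setLIntegral_congr_fun measurableSet_Ioi (fun t ht => ?_)
    rw [Real.norm_of_nonneg (div_nonneg (hgnn t) (by positivity))]
  rw [hnorm, hcover, lintegral_iUnion (fun n => measurableSet_Ioc) hdisj]
  have hblock : ∀ n : ℕ, ∫⁻ t in Ioc (a n) (a (n+1)), ENNReal.ofReal (g t / t ^ 2)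
      ≤ ENNReal.ofReal (C / (a n) ^ 2) := by
    intro n
    have hstep1 : ∫⁻ t in Ioc (a n) (a (n+1)), ENNReal.ofReal (g t / t ^ 2)
        ≤ ∫⁻ t in Ioc (a n) (a (n+1)), ENNReal.ofReal (g t) * ENNReal.ofReal (1 / (a n) ^ 2) := by
      refine setLIntegral_mono ((hgc.measurable.ennreal_ofReal).mul_const _) fun t ht => ?_
      rw [← ENNReal.ofReal_mul (hgnn t)]
      apply ENNReal.ofReal_le_ofReal
      rw [mul_one_div]
      apply div_le_div_of_nonneg_left (hgnn t) (by positivity)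
      have h1 : a n ≤ t := ht.1.le
      nlinarith [hapos n]
    have hstep2 : ∫⁻ t in Ioc (a n) (a (n+1)), ENNReal.ofReal (g t) * ENNReal.ofReal (1 / (a n) ^ 2)
        = (∫⁻ t in Ioc (a n) (a (n+1)), ENNReal.ofReal (g t)) * ENNReal.ofReal (1 / (a n) ^ 2) :=
      lintegral_mul_const _ (hgc.measurable.ennreal_ofReal)
    have hint : IntegrableOn g (Ioc (a n) (a (n+1))) volume :=
      (hgc.integrableOn_Icc).mono_set Ioc_subset_Icc_self
    have hstep3 : ∫⁻ t in Ioc (a n) (a (n+1)), ENNReal.ofReal (g t)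
        = ENNReal.ofReal (∫ t in Ioc (a n) (a (n+1)), g t) :=
      (ofReal_integral_eq_lintegral_ofReal hint (ae_of_all _ hgnn)).symm
    have ha1 : a (n+1) = a n + N := by simp only [ha]; push_cast; ring
    have hstep4 : (∫ t in Ioc (a n) (a (n+1)), g t) ≤ C := by
      rw [← intervalIntegral.integral_of_le (by rw [ha1]; linarith)]
      rw [ha1]
      exact hsum (a n)
    calc ∫⁻ t in Ioc (a n) (a (n+1)), ENNReal.ofReal (g t / t ^ 2)
        ≤ (∫⁻ t in Ioc (a n) (a (n+1)), ENNReal.ofReal (g t)) * ENNReal.ofReal (1 / (a n) ^ 2) :=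
          hstep1.trans hstep2.le
      _ ≤ ENNReal.ofReal C * ENNReal.ofReal (1 / (a n) ^ 2) := by
          gcongr
          rw [hstep3]
          exact ENNReal.ofReal_le_ofReal hstep4
      _ = ENNReal.ofReal (C / (a n) ^ 2) := by
          rw [← ENNReal.ofReal_mul hC, mul_one_div]
  have hsummable : Summable (fun n : ℕ => C / (a n) ^ 2) := by
    set c : ℝ := min R N with hcdef
    have hc : 0 < c := lt_min hR hN
    have hle : ∀ n : ℕ, C / (a n) ^ 2 ≤ (C / c ^ 2) * (1 / ((n:ℝ) + 1) ^ 2) := by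
      intro n
      have h1 : c * ((n:ℝ) + 1) ≤ a n := by
        simp only [ha]
        have h2 : c ≤ R := min_le_left _ _
        have h3 : c ≤ N := min_le_right _ _
        have h4 : (0:ℝ) ≤ n := Nat.cast_nonneg n
        nlinarith
      have h5 : 0 < c * ((n:ℝ)+1) := by positivity
      rw [div_mul_eq_mul_div, mul_one_div, div_div]
      apply div_le_div_of_nonneg_left hC (by positivity)
      calc ((n:ℝ)+1) ^ 2 * c ^ 2 = (c * ((n:ℝ)+1)) ^ 2 := by ring
        _ ≤ (a n) ^ 2 := by nlinarith [hapos n]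
    have hs2 : Summable (fun n : ℕ => (C / c ^ 2) * (1 / ((n:ℝ) + 1) ^ 2)) := by
      apply Summable.mul_left
      have := (Real.summable_one_div_nat_pow (p := 2)).2 (by norm_num)
      have h := (summable_nat_add_iff 1).2 this
      simpa using h
    exact Summable.of_nonneg_of_le (fun n => by positivity) hle hs2
  calc ∑' n : ℕ, ∫⁻ t in Ioc (a n) (a (n+1)), ENNReal.ofReal (g t / t ^ 2)
      ≤ ∑' n : ℕ, ENNReal.ofReal (C / (a n) ^ 2) := ENNReal.tsum_le_tsum hblock
    _ = ENNReal.ofReal (∑' n : ℕ, C / (a n) ^ 2) :=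
        (ENNReal.ofReal_tsum_of_nonneg (fun n => by positivity) hsummable).symm
    _ < ⊤ := ENNReal.ofReal_lt_top

lemma logStar_tail_bound (z : ℂ) (t : ℝ) (ht : 2 * (‖z‖ + 1) ≤ |t|) :
    |logStar z t| ≤ ‖z‖ ^ 2 / t ^ 2 := by
  have hz0 : 0 ≤ ‖z‖ := norm_nonneg z
  have ht2 : (2:ℝ) ≤ |t| := by linarith
  have ht1 : 1 < |t| := by linarith
  have ht0 : t ≠ 0 := by
    intro h; rw [h] at ht2; simp at ht2; linarith
  have htC : (t:ℂ) ≠ 0 := Complex.ofReal_ne_zero.2 ht0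
  set w : ℂ := -(z / (t:ℂ)) with hw
  have hwnorm : ‖w‖ = ‖z‖ / |t| := by
    rw [hw, norm_neg]
    simp
  have hwhalf : ‖w‖ ≤ 1/2 := by
    rw [hwnorm]
    rw [div_le_div_iff₀ (by linarith) (by norm_num)]
    linarith
  have hre : logStar z t = (Complex.log (1 + w) - w).re := by
    unfold logStar
    rw [if_pos ht1]
    have h1 : (1:ℂ) + w = 1 - z / (t:ℂ) := by rw [hw]; ring
    rw [h1, Complex.sub_re, Complex.log_re]
    have h2 : w.re = -(z.re / t) := by
      rw [hw]
      simp [Complex.div_ofReal_re]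
    rw [h2]
    ring
  have hbound : ‖Complex.log (1 + w) - w‖ ≤ ‖w‖ ^ 2 := by
    have h := Complex.norm_log_one_add_sub_self_le (lt_of_le_of_lt hwhalf (by norm_num))
    have h2 : (1 - ‖w‖)⁻¹ ≤ 2 := by
      rw [inv_le_comm₀ (by linarith [norm_nonneg w, hwhalf]) (by norm_num)]
      linarith
    calc ‖Complex.log (1 + w) - w‖ ≤ ‖w‖ ^ 2 * (1 - ‖w‖)⁻¹ / 2 := h
      _ ≤ ‖w‖ ^ 2 * 2 / 2 := by
          apply div_le_div_of_nonneg_right _ (by norm_num)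
          exact mul_le_mul_of_nonneg_left h2 (by positivity)
      _ = ‖w‖ ^ 2 := by ring
  calc |logStar z t| = |(Complex.log (1 + w) - w).re| := by rw [hre]
    _ ≤ ‖Complex.log (1 + w) - w‖ := Complex.abs_re_le_norm _
    _ ≤ ‖w‖ ^ 2 := hbound
    _ = ‖z‖ ^ 2 / t ^ 2 := by
        rw [hwnorm, div_pow, sq_abs]

lemma logStar_lt (z : ℂ) (hz : 0 ≤ z.im) (t : ℝ) (ht0 : t ≠ 0) (htz : (t:ℂ) ≠ z) :
    logStar z t < logStar (z + Complex.I) t := by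
  have htC : (t:ℂ) ≠ 0 := Complex.ofReal_ne_zero.2 ht0
  have habs : |t| ≠ 0 := abs_ne_zero.2 ht0
  have habspos : 0 < |t| := abs_pos.2 ht0
  have hne : (t:ℂ) - z ≠ 0 := sub_ne_zero.2 htz
  have key : ‖(t:ℂ) - z‖ < ‖(t:ℂ) - (z + Complex.I)‖ := by
    apply lt_of_pow_lt_pow_left₀ 2 (norm_nonneg _)
    rw [Complex.sq_norm, Complex.sq_norm, Complex.normSq_apply, Complex.normSq_apply]
    have h1 : ((t:ℂ) - z).re = t - z.re := by simp
    have h2 : ((t:ℂ) - z).im = -z.im := by simp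
    have h3 : ((t:ℂ) - (z + Complex.I)).re = t - z.re := by simp
    have h4 : ((t:ℂ) - (z + Complex.I)).im = -z.im - 1 := by simp; ring
    rw [h1, h2, h3, h4]
    nlinarith
  have hd1 : (1:ℂ) - z / t = ((t:ℂ) - z) / t := by field_simp
  have hd2 : (1:ℂ) - (z + Complex.I) / t = ((t:ℂ) - (z + Complex.I)) / t := by field_simp
  have hlt : Real.log (‖1 - z / (t:ℂ)‖)
      < Real.log (‖1 - (z + Complex.I) / (t:ℂ)‖) := by
    apply Real.log_lt_log
    · rw [hd1, norm_div]
      apply div_pos (norm_pos_iff.mpr hne)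
      simpa using habspos
    · rw [hd1, hd2, norm_div, norm_div]
      apply div_lt_div_of_pos_right key  -- may need name fix
      simpa using habspos
  unfold logStar
  have hzre : (z + Complex.I).re = z.re := by simp
  split_ifs with h1
  · rw [hzre]; linarith
  · exact hlt

lemma integrable_logStar_mul {γ : ℝ → ℝ} (hγpos : ∀ t, 0 < γ t) (hγcont : Continuous γ)
    {N C₂ : ℝ} (hN : 0 < N) (hC₂ : 0 ≤ C₂)
    (hsum : ∀ a : ℝ, (∫ t in a..(a+N), γ t) ≤ C₂ * N) (z : ℂ) :
    Integrable (fun t => logStar z t * γ t) volume := by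
  set R : ℝ := 2 * (‖z‖ + 1) + N with hR
  have hRpos : 0 < R := by positivity
  have hγnn : ∀ t, 0 ≤ γ t := fun t => (hγpos t).le
  have hCN : 0 ≤ C₂ * N := by positivity
  -- measurability
  have hmeas : AEStronglyMeasurable (fun t => logStar z t * γ t) volume :=
    ((measurable_logStar z).mul hγcont.measurable).aestronglyMeasurable
  -- compact part
  have hcompact : IntegrableOn (fun t => logStar z t * γ t) (Icc (-R) R) volume := by
    have h := (intervalIntegrable_logStar z (-R) R).mul_continuousOn
      (hγcont.continuousOn)
    exact (intervalIntegrable_iff_integrableOn_Icc_of_le (by linarith)).1 h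
  -- positive tail
  have htail : IntegrableOn (fun t => γ t / t ^ 2) (Ioi R) volume :=
    tail_integrable hγcont hγnn hN hCN hsum hRpos
  have hpos_tail : IntegrableOn (fun t => logStar z t * γ t) (Ioi R) volume := by
    refine Integrable.mono' (htail.const_mul (‖z‖ ^ 2))
      hmeas.restrict ?_
    filter_upwards [ae_restrict_mem measurableSet_Ioi] with t ht
    have htR : 2 * (‖z‖ + 1) ≤ |t| := by
      rw [abs_of_pos (lt_trans hRpos ht)]
      simp only [mem_Ioi] at ht
      linarith
    rw [Real.norm_eq_abs, abs_mul, abs_of_nonneg (hγnn t)]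
    calc |logStar z t| * γ t ≤ (‖z‖ ^ 2 / t ^ 2) * γ t :=
          mul_le_mul_of_nonneg_right (logStar_tail_bound z t htR) (hγnn t)
      _ = ‖z‖ ^ 2 * (γ t / t ^ 2) := by ring
  -- negative tail
  have hneg_tail : IntegrableOn (fun t => logStar z t * γ t) (Iio (-R)) volume := by
    have htail2 : IntegrableOn (fun t => γ (-t) / t ^ 2) (Ioi R) volume := by
      refine tail_integrable (hγcont.comp continuous_neg) (fun t => hγnn (-t)) hN hCN ?_ hRpos
      intro a
      show (∫ t in a..(a+N), γ (-t)) ≤ C₂ * N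
      have h := intervalIntegral.integral_comp_neg (a := a) (b := a + N) (fun t => γ t)
      rw [h]
      have h2 : (∫ t in (-(a+N))..(-a), γ t) = ∫ t in (-(a+N))..(-(a+N)+N), γ t := by
        congr 1; ring
      rw [h2]
      exact hsum _
    have hIoi : IntegrableOn (fun t => logStar z (-t) * γ (-t)) (Ioi R) volume := by
      refine Integrable.mono' (htail2.const_mul (‖z‖ ^ 2))
        ((((measurable_logStar z).comp measurable_neg).mul
          (hγcont.measurable.comp measurable_neg)).aestronglyMeasurable.restrict) ?_
      filter_upwards [ae_restrict_mem measurableSet_Ioi] with t ht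
      simp only [mem_Ioi] at ht
      have htR : 2 * (‖z‖ + 1) ≤ |(-t)| := by
        rw [abs_neg, abs_of_pos (lt_trans hRpos ht)]
        linarith
      rw [Real.norm_eq_abs, abs_mul, abs_of_nonneg (hγnn (-t))]
      calc |logStar z (-t)| * γ (-t) ≤ (‖z‖ ^ 2 / (-t) ^ 2) * γ (-t) :=
            mul_le_mul_of_nonneg_right (logStar_tail_bound z (-t) htR) (hγnn (-t))
        _ = ‖z‖ ^ 2 * (γ (-t) / t ^ 2) := by ring_nf
    have hpre : (fun t : ℝ => -t) ⁻¹' (Iio (-R)) = Ioi R := by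
      ext x; simp only [mem_preimage, mem_Iio, mem_Ioi]; constructor <;> intro h <;> linarith
    refine (MeasurePreserving.integrableOn_comp_preimage
      (Measure.measurePreserving_neg (volume : Measure ℝ))
      (Homeomorph.neg ℝ).measurableEmbedding
      (f := fun t => logStar z t * γ t) (s := Iio (-R))).1 ?_
    have hpre' : (Neg.neg ⁻¹' (Iio (-R)) : Set ℝ) = Ioi R := by
      ext x; simp only [mem_preimage, mem_Iio, mem_Ioi]; constructor <;> intro h <;> linarith
    rw [show ((fun t => logStar z t * γ t) ∘ Neg.neg) = fun t : ℝ => logStar z (-t) * γ (-t)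
      from rfl, hpre']
    exact hIoi
  have huniv : (univ : Set ℝ) = Iio (-R) ∪ (Icc (-R) R ∪ Ioi R) := by
    ext x
    simp only [mem_univ, true_iff, mem_union, mem_Iio, mem_Icc, mem_Ioi]
    rcases lt_or_ge x (-R) with h | h
    · exact Or.inl h
    · rcases le_or_gt x R with h2 | h2
      · exact Or.inr (Or.inl ⟨h, h2⟩)
      · exact Or.inr (Or.inr h2)
  rw [← integrableOn_univ, huniv]
  exact hneg_tail.union (hcompact.union hpos_tail)

theorem stmt_7 (γ : ℝ → ℝ) (hγpos : ∀ t, 0 < γ t) (hγcont : Continuous γ)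
    (φ : ℝ → ℝ) (hφ : ∀ x, φ x = ∫ t in (0:ℝ)..x, γ t)
    (N C₁ C₂ : ℝ) (hN : 0 < N) (hC₁ : 0 < C₁) (hC₂ : 0 < C₂)
    (hbl : ∀ x₁ x₂ : ℝ, N ≤ x₂ - x₁ →
      C₁ * (x₂ - x₁) ≤ φ x₂ - φ x₁ ∧ φ x₂ - φ x₁ ≤ C₂ * (x₂ - x₁)) :
    ∀ z : ℂ, 0 ≤ z.im → pot γ z < pot γ (z + Complex.I) := by
  have hsum : ∀ a : ℝ, (∫ t in a..(a+N), γ t) ≤ C₂ * N := by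
    intro a
    have h1 : (∫ t in a..(a+N), γ t) = φ (a + N) - φ a := by
      rw [hφ, hφ]
      rw [← intervalIntegral.integral_interval_sub_left
        (hγcont.intervalIntegrable _ _) (hγcont.intervalIntegrable _ _)]
    have h2 := (hbl a (a + N) (by linarith)).2
    rw [h1]
    calc φ (a + N) - φ a ≤ C₂ * (a + N - a) := h2
      _ = C₂ * N := by ring
  intro z hz
  set f : ℝ → ℝ := fun t => logStar z t * γ t with hfdef
  set g : ℝ → ℝ := fun t => logStar (z + Complex.I) t * γ t with hgdef
  have hf : Integrable f volume := integrable_logStar_mul hγpos hγcont hN hC₂.le hsum z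
  have hg : Integrable g volume :=
    integrable_logStar_mul hγpos hγcont hN hC₂.le hsum (z + Complex.I)
  have hnull : (volume : Measure ℝ) ({0, z.re} : Set ℝ) = 0 :=
    Set.Countable.measure_zero ((Set.finite_singleton _).insert _).countable _
  have hae : ∀ᵐ t : ℝ ∂volume, t ∉ ({0, z.re} : Set ℝ) :=
    measure_eq_zero_iff_ae_notMem.1 hnull
  have hkey : ∀ t : ℝ, t ∉ ({0, z.re} : Set ℝ) → 0 < g t - f t := by
    intro t ht
    simp only [Set.mem_insert_iff, Set.mem_singleton_iff, not_or] at ht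
    have htz : (t:ℂ) ≠ z := by
      intro h
      exact ht.2 (by rw [← h]; simp)
    have hlt := logStar_lt z hz t ht.1 htz
    have := mul_lt_mul_of_pos_right hlt (hγpos t)
    simpa [hfdef, hgdef, sub_pos] using this
  have hnn : 0 ≤ᵐ[volume] (g - f) := by
    filter_upwards [hae] with t ht
    simpa using (hkey t ht).le
  have hpos : 0 < ∫ t : ℝ, (g - f) t := by
    refine (integral_pos_iff_support_of_nonneg_ae hnn (hg.sub hf)).2 ?_
    have hsub : ({0, z.re} : Set ℝ)ᶜ ⊆ Function.support (g - f) := by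
      intro t ht
      simpa using (hkey t ht).ne'
    have hcm : volume (({0, z.re} : Set ℝ)ᶜ) = ⊤ := by
      rw [measure_compl (((Set.finite_singleton _).insert _).measurableSet)
        (by rw [hnull]; exact ENNReal.zero_ne_top), hnull]
      simp
    calc (0 : ENNReal) < ⊤ := by simp
      _ = volume (({0, z.re} : Set ℝ)ᶜ) := hcm.symm
      _ ≤ volume (Function.support (g - f)) := measure_mono hsub
  have hsubint : (∫ t : ℝ, (g - f) t) = (∫ t : ℝ, g t) - ∫ t : ℝ, f t := by
    simp only [Pi.sub_apply]
    exact integral_sub hg hf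
  have e1 : pot γ z = ∫ t : ℝ, f t := rfl
  have e2 : pot γ (z + Complex.I) = ∫ t : ℝ, g t := rfl
  rw [e1, e2]
  rw [hsubint] at hpos
  linarith
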